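/- Let p', q', s be integers with gcd(p', q') = 1, 1 ≤ q' < p', s < 0, and p'·q' = -4s. If the pair (p', q') gives an unknotted torus knot, i.e., q' = 1, and the quadruple (p', 1, 2, s) lies in one of Lee's seven families, then s = -1 and p' = 4. -/
import Mathlib


/-- Lee's seven families of parameters of unknotted twisted torus knots. -/
def LeeFamily (P Q R S : ℤ) : Prop :=
  (∃ n : ℤ, 1 ≤ n ∧ (P, Q, R, S) = (n+1, n, n+1, -1)) ∨
  (∃ n : ℤ, 2 ≤ n ∧ (P, Q, R, S) = (n+1, n, n, -1)) ∨
  (∃ m n : ℤ, 2 ≤ m ∧ 2 ≤ n ∧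
    ((P, Q, R, S) = (m*n+1, n, n, -m) ∨ (P, Q, R, S) = (m*n-1, n, n, -m))) ∨
  (∃ n : ℤ, 3 ≤ n ∧ (P, Q, R, S) = (n, 1, 2, -1)) ∨
  (∃ n : ℤ, 2 ≤ n ∧
    ((P, Q, R, S) = (4*n+1, n, 2*n, -1) ∨ (P, Q, R, S) = (4*n-1, n, 2*n, -1))) ∨
  (∃ n : ℤ, 4 ≤ n ∧ Even n ∧ (P, Q, R, S) = (n+1, n-1, n, -1)) ∨
  (∃ n : ℕ, 4 ≤ n ∧ (P, Q, R, S) = ((Nat.fib (n+1) : ℤ), (Nat.fib (n-1) : ℤ), (Nat.fib n : ℤ), -1))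

/-- Case 4 (r = 3) of Proposition 3.2: the constraints force `s = -1` and `p' = 4`. -/
theorem case_r_three (p' q' s : ℤ) (hgcd : Int.gcd p' q' = 1)
    (hq1 : 1 ≤ q') (hqp : q' < p') (hs : s < 0)
    (hpq : p' * q' = -(4 * s)) (hq : q' = 1)
    (hLee : LeeFamily p' 1 2 s) :
    s = -1 ∧ p' = 4 := by
  subst hq
  rcases hLee with ⟨n, hn, h⟩ | ⟨n, hn, h⟩ | ⟨m, n, hm, hn, h | h⟩ | ⟨n, hn, h⟩ |
      ⟨n, hn, h | h⟩ | ⟨n, hn, _, h⟩ | ⟨n, hn, h⟩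
  all_goals simp only [Prod.mk.injEq] at h
  all_goals try omega
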